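/- On H×ℂ* with coordinates (z,w), z = x+iy, the metric ω₀ = (4/|w|²)√-1 dw∧dw̄ + (2/y²)√-1 dz∧dz̄ + (2i/(yw))√-1 dw∧dz̄ - (2i/(yw̄))√-1 dz∧dw̄ satisfies det(g₀) = 4/(y²|w|²), is positive definite, and Ric(ω₀) = -(1/(2y²))√-1 dz∧dz̄. -/

import Mathlib

open Complex
open scoped ComplexOrder

/-- Wirtinger derivative `∂/∂z_i` (i = 0 is `z`, i = 1 is `w`) on `ℂ × ℂ`. -/
noncomputable def wd (i : Fin 2) (f : ℂ × ℂ → ℂ) (p : ℂ × ℂ) : ℂ :=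
  if i = 0 then (fderiv ℝ f p (1, 0) - Complex.I * fderiv ℝ f p (Complex.I, 0)) / 2
  else (fderiv ℝ f p (0, 1) - Complex.I * fderiv ℝ f p (0, Complex.I)) / 2

/-- Wirtinger derivative `∂/∂z̄_i` on `ℂ × ℂ`. -/
noncomputable def wdb (i : Fin 2) (f : ℂ × ℂ → ℂ) (p : ℂ × ℂ) : ℂ :=
  if i = 0 then (fderiv ℝ f p (1, 0) + Complex.I * fderiv ℝ f p (Complex.I, 0)) / 2
  else (fderiv ℝ f p (0, 1) + Complex.I * fderiv ℝ f p (0, Complex.I)) / 2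

/-- The coefficient matrix of the Vaisman metric
`ω₀ = (4/|w|²)√-1 dw∧dw̄ + (2/y²)√-1 dz∧dz̄ + (2i/(yw))√-1 dw∧dz̄ - (2i/(yw̄))√-1 dz∧dw̄`
on `H×ℂ*` (index 0 = `z`, index 1 = `w`). -/
noncomputable def gV (p : ℂ × ℂ) : Matrix (Fin 2) (Fin 2) ℂ :=
  !![((2 / p.1.im ^ 2 : ℝ) : ℂ), -2 * Complex.I / ((p.1.im : ℂ) * (starRingEnd ℂ) p.2);
     2 * Complex.I / ((p.1.im : ℂ) * p.2), ((4 / Complex.normSq p.2 : ℝ) : ℂ)]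

noncomputable def L1 : ℂ × ℂ →L[ℝ] ℝ := Complex.imCLM.comp (ContinuousLinearMap.fst ℝ ℂ ℂ)
noncomputable def R2 : ℂ × ℂ →L[ℝ] ℝ := Complex.reCLM.comp (ContinuousLinearMap.snd ℝ ℂ ℂ)
noncomputable def I2 : ℂ × ℂ →L[ℝ] ℝ := Complex.imCLM.comp (ContinuousLinearMap.snd ℝ ℂ ℂ)

lemma isOpen_U : IsOpen {r : ℂ × ℂ | 0 < r.1.im ∧ r.2 ≠ 0} := by
  refine IsOpen.and ?_ ?_
  · exact isOpen_lt continuous_const (Complex.continuous_im.comp continuous_fst)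
  · exact isOpen_ne.preimage continuous_snd

lemma hasFDerivAt_logF (q : ℂ × ℂ) (hy : 0 < q.1.im) (hw : q.2 ≠ 0) :
    HasFDerivAt (fun q : ℂ × ℂ => ((Real.log (4 / (q.1.im ^ 2 * Complex.normSq q.2)) : ℝ) : ℂ))
      (Complex.ofRealCLM.comp
        ((-2 * q.1.im⁻¹) • L1 +
          (-(Complex.normSq q.2)⁻¹) • ((2 * q.2.re) • R2 + (2 * q.2.im) • I2))) q := by
  have hn : 0 < Complex.normSq q.2 := Complex.normSq_pos.2 hw
  have t1 : HasFDerivAt (fun q : ℂ × ℂ => Real.log q.1.im) (q.1.im⁻¹ • L1) q :=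
    by have := (Real.hasDerivAt_log hy.ne').comp_hasFDerivAt q L1.hasFDerivAt; exact this
  have tns : HasFDerivAt (fun q : ℂ × ℂ => Complex.normSq q.2)
      ((2 * q.2.re) • R2 + (2 * q.2.im) • I2) q := by
    have : HasFDerivAt (fun q : ℂ × ℂ => R2 q * R2 q + I2 q * I2 q)
        ((R2 q • R2 + R2 q • R2) + (I2 q • I2 + I2 q • I2)) q :=
      (R2.hasFDerivAt.mul R2.hasFDerivAt).add (I2.hasFDerivAt.mul I2.hasFDerivAt)
    have hfun : (fun q : ℂ × ℂ => Complex.normSq q.2) =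
        fun q : ℂ × ℂ => R2 q * R2 q + I2 q * I2 q := by
      funext r
      simp [Complex.normSq_apply, R2, I2]
    rw [hfun]
    convert this using 1
    ext v
    all_goals (simp [R2, I2]; try ring)
  have t2 : HasFDerivAt (fun q : ℂ × ℂ => Real.log (Complex.normSq q.2))
      ((Complex.normSq q.2)⁻¹ • ((2 * q.2.re) • R2 + (2 * q.2.im) • I2)) q :=
    by have := (Real.hasDerivAt_log hn.ne').comp_hasFDerivAt q tns; exact this
  have t3 : HasFDerivAt
      (fun q : ℂ × ℂ => Real.log 4 - 2 * Real.log q.1.im - Real.log (Complex.normSq q.2))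
      ((-2 * q.1.im⁻¹) • L1 +
        (-(Complex.normSq q.2)⁻¹) • ((2 * q.2.re) • R2 + (2 * q.2.im) • I2)) q := by
    have := ((hasFDerivAt_const (Real.log 4) q).sub (t1.const_mul 2)).sub t2
    refine HasFDerivAt.congr_fderiv this ?_
    ext v
    all_goals (simp; try ring)
  have t4 : HasFDerivAt
      (fun q : ℂ × ℂ => Real.log (4 / (q.1.im ^ 2 * Complex.normSq q.2)))
      ((-2 * q.1.im⁻¹) • L1 +
        (-(Complex.normSq q.2)⁻¹) • ((2 * q.2.re) • R2 + (2 * q.2.im) • I2)) q := by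
    refine t3.congr_of_eventuallyEq ?_
    filter_upwards [isOpen_U.mem_nhds ⟨hy, hw⟩] with r hr
    have hy' : r.1.im ≠ 0 := hr.1.ne'
    have hn' : Complex.normSq r.2 ≠ 0 := (Complex.normSq_pos.2 hr.2).ne'
    rw [Real.log_div (by norm_num) (by positivity),
      Real.log_mul (by positivity) hn', Real.log_pow]
    push_cast
    ring
  exact Complex.ofRealCLM.hasFDerivAt.comp q t4

lemma wdb0_logF (q : ℂ × ℂ) (hy : 0 < q.1.im) (hw : q.2 ≠ 0) :
    wdb 0 (fun q => ((Real.log (4 / (q.1.im ^ 2 * Complex.normSq q.2)) : ℝ) : ℂ)) q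
      = -Complex.I / (q.1.im : ℂ) := by
  have h := (hasFDerivAt_logF q hy hw).fderiv
  have hy' : (q.1.im : ℂ) ≠ 0 := by exact_mod_cast hy.ne'
  simp only [wdb, if_pos rfl, h]
  simp [L1, R2, I2]
  field_simp

lemma wdb1_logF (q : ℂ × ℂ) (hy : 0 < q.1.im) (hw : q.2 ≠ 0) :
    wdb 1 (fun q => ((Real.log (4 / (q.1.im ^ 2 * Complex.normSq q.2)) : ℝ) : ℂ)) q
      = -((starRingEnd ℂ) q.2)⁻¹ := by
  have h := (hasFDerivAt_logF q hy hw).fderiv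
  have hn : (Complex.normSq q.2 : ℝ) ≠ 0 := (Complex.normSq_pos.2 hw).ne'
  have hw' : (starRingEnd ℂ) q.2 ≠ 0 := by simpa using hw
  simp only [wdb, h]
  norm_num
  simp [L1, R2, I2]
  have hq : q.2 = (q.2.re : ℂ) + (q.2.im : ℂ) * Complex.I := (Complex.re_add_im q.2).symm
  simp only [Complex.inv_def, Complex.normSq_conj, Complex.conj_conj]
  push_cast
  simp only [Complex.conj_ofReal, Complex.normSq_ofReal]
  push_cast
  have hn' : ((Complex.normSq q.2 : ℝ) : ℂ) ≠ 0 := by exact_mod_cast hn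
  field_simp
  linear_combination hq

lemma E0_apply (y : ℝ) (v : ℂ × ℂ) :
    ((-Complex.I) • (Complex.ofRealCLM.comp ((-(y ^ 2)⁻¹) • L1))) v
      = -Complex.I * ((-(y ^ 2)⁻¹ * v.1.im : ℝ) : ℂ) := by
  simp [L1]

lemma E1_apply (d : ℂ) (v : ℂ × ℂ) :
    (-((ContinuousLinearMap.smulRight (1 : ℂ →L[ℂ] ℂ) d).restrictScalars ℝ).comp
        ((Complex.conjCLE.toContinuousLinearMap).comp (ContinuousLinearMap.snd ℝ ℂ ℂ))) v
      = -((starRingEnd ℂ) v.2 * d) := by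
  simp [ContinuousLinearMap.smulRight_apply, Complex.conjCLE_apply, smul_eq_mul]

lemma hasFDerivAt_g1 (q : ℂ × ℂ) (hy : 0 < q.1.im) :
    HasFDerivAt (fun r : ℂ × ℂ => -Complex.I / (r.1.im : ℂ))
      ((-Complex.I) • (Complex.ofRealCLM.comp ((-(q.1.im ^ 2)⁻¹) • L1))) q := by
  have t1 : HasFDerivAt (fun r : ℂ × ℂ => (r.1.im)⁻¹) ((-(q.1.im ^ 2)⁻¹) • L1) q :=
    (hasDerivAt_inv hy.ne').comp_hasFDerivAt q L1.hasFDerivAt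
  have t2 := Complex.ofRealCLM.hasFDerivAt.comp q t1
  have t3 := t2.const_mul (-Complex.I)
  refine t3.congr_of_eventuallyEq ?_
  filter_upwards with r
  simp [div_eq_mul_inv]

lemma hasFDerivAt_g2 (q : ℂ × ℂ) (hw : q.2 ≠ 0) :
    HasFDerivAt (fun r : ℂ × ℂ => -((starRingEnd ℂ) r.2)⁻¹)
      (-((ContinuousLinearMap.smulRight (1 : ℂ →L[ℂ] ℂ)
            (-(((starRingEnd ℂ) q.2) ^ 2)⁻¹)).restrictScalars ℝ).comp
        ((Complex.conjCLE.toContinuousLinearMap).comp (ContinuousLinearMap.snd ℝ ℂ ℂ))) q := by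
  have hcw : (starRingEnd ℂ) q.2 ≠ 0 := by simpa using hw
  have hinv : HasFDerivAt (fun z : ℂ => z⁻¹)
      ((ContinuousLinearMap.smulRight (1 : ℂ →L[ℂ] ℂ)
        (-(((starRingEnd ℂ) q.2) ^ 2)⁻¹)).restrictScalars ℝ) ((starRingEnd ℂ) q.2) :=
    ((hasDerivAt_inv hcw).hasFDerivAt).restrictScalars ℝ
  have hC : HasFDerivAt (fun r : ℂ × ℂ => (starRingEnd ℂ) r.2)
      ((Complex.conjCLE.toContinuousLinearMap).comp (ContinuousLinearMap.snd ℝ ℂ ℂ)) q :=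
    ((Complex.conjCLE.toContinuousLinearMap).comp (ContinuousLinearMap.snd ℝ ℂ ℂ)).hasFDerivAt
  exact (hinv.comp q hC).neg

set_option maxHeartbeats 2000000 in
/-- On `H×ℂ*`, the metric `ω₀` above satisfies
`det g₀ = 4/(y²|w|²)`, it is positive definite, and
`Ric(ω₀) = -√-1∂∂̄ log det g₀ = -(1/(2y²))√-1 dz∧dz̄` (all other Ricci coefficients
vanish). -/
theorem stmt10 (p : ℂ × ℂ) (hp : 0 < p.1.im) (hw : p.2 ≠ 0) :
    ((gV p).det = ((4 / (p.1.im ^ 2 * Complex.normSq p.2) : ℝ) : ℂ)) ∧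
    (gV p).PosDef ∧
    (-wd 0 (wdb 0 (fun q => ((Real.log (4 / (q.1.im ^ 2 * Complex.normSq q.2)) : ℝ) : ℂ))) p
        = -(1 / (2 * (p.1.im : ℂ) ^ 2))) ∧
    (-wd 0 (wdb 1 (fun q => ((Real.log (4 / (q.1.im ^ 2 * Complex.normSq q.2)) : ℝ) : ℂ))) p = 0) ∧
    (-wd 1 (wdb 0 (fun q => ((Real.log (4 / (q.1.im ^ 2 * Complex.normSq q.2)) : ℝ) : ℂ))) p = 0) ∧
    (-wd 1 (wdb 1 (fun q => ((Real.log (4 / (q.1.im ^ 2 * Complex.normSq q.2)) : ℝ) : ℂ))) p = 0) := by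
  have hy' : (p.1.im : ℂ) ≠ 0 := by exact_mod_cast hp.ne'
  have hcw : (starRingEnd ℂ) p.2 ≠ 0 := by simpa using hw
  have hn : (Complex.normSq p.2 : ℝ) ≠ 0 := (Complex.normSq_pos.2 hw).ne'
  have hn' : ((Complex.normSq p.2 : ℝ) : ℂ) ≠ 0 := by exact_mod_cast hn
  have hmc : p.2 * (starRingEnd ℂ) p.2 = ((Complex.normSq p.2 : ℝ) : ℂ) := Complex.mul_conj p.2
  -- eventual equalities for the first Wirtinger derivatives
  have e0 : wdb 0 (fun q => ((Real.log (4 / (q.1.im ^ 2 * Complex.normSq q.2)) : ℝ) : ℂ))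
      =ᶠ[nhds p] fun r : ℂ × ℂ => -Complex.I / (r.1.im : ℂ) := by
    filter_upwards [isOpen_U.mem_nhds ⟨hp, hw⟩] with r hr
    exact wdb0_logF r hr.1 hr.2
  have e1 : wdb 1 (fun q => ((Real.log (4 / (q.1.im ^ 2 * Complex.normSq q.2)) : ℝ) : ℂ))
      =ᶠ[nhds p] fun r : ℂ × ℂ => -((starRingEnd ℂ) r.2)⁻¹ := by
    filter_upwards [isOpen_U.mem_nhds ⟨hp, hw⟩] with r hr
    exact wdb1_logF r hr.1 hr.2
  have f0 : fderiv ℝ (wdb 0 (fun q => ((Real.log (4 / (q.1.im ^ 2 * Complex.normSq q.2)) : ℝ) : ℂ))) p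
      = (-Complex.I) • (Complex.ofRealCLM.comp ((-(p.1.im ^ 2)⁻¹) • L1)) :=
    e0.fderiv_eq.trans (hasFDerivAt_g1 p hp).fderiv
  have f1 : fderiv ℝ (wdb 1 (fun q => ((Real.log (4 / (q.1.im ^ 2 * Complex.normSq q.2)) : ℝ) : ℂ))) p
      = -((ContinuousLinearMap.smulRight (1 : ℂ →L[ℂ] ℂ)
            (-(((starRingEnd ℂ) p.2) ^ 2)⁻¹)).restrictScalars ℝ).comp
          ((Complex.conjCLE.toContinuousLinearMap).comp (ContinuousLinearMap.snd ℝ ℂ ℂ)) :=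
    e1.fderiv_eq.trans (hasFDerivAt_g2 p hw).fderiv
  refine ⟨?_, ?_, ?_, ?_, ?_, ?_⟩
  · -- determinant
    simp only [gV, Matrix.det_fin_two_of]
    push_cast
    field_simp
    linear_combination 4 * hmc + (4 * ((Complex.normSq p.2 : ℝ) : ℂ)) * Complex.I_sq
  · -- positive definiteness
    refine Matrix.PosDef.of_dotProduct_mulVec_pos ?_ ?_
    · -- Hermitian
      ext i j
      fin_cases i <;> fin_cases j <;>
        simp [gV, Matrix.conjTranspose_apply, Complex.conj_ofReal, map_div₀] <;> ring
    · intro x hx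
      have key : dotProduct (star x) ((gV p).mulVec x)
          = ((2 * Complex.normSq (x 0 / (p.1.im : ℂ) - Complex.I * x 1 / (starRingEnd ℂ) p.2)
              + 2 * Complex.normSq (x 1) / Complex.normSq p.2 : ℝ) : ℂ) := by
        simp only [gV, Matrix.mulVec, dotProduct, Fin.sum_univ_two,
          Matrix.cons_val', Matrix.cons_val_zero, Matrix.cons_val_one, Matrix.head_cons,
          Matrix.empty_val', Matrix.cons_val_fin_one, Matrix.head_fin_const, Pi.star_apply, Matrix.of_apply]
        push_cast
        rw [← Complex.mul_conj, ← Complex.mul_conj]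
        simp only [map_sub, map_div₀, map_mul, Complex.conj_I, Complex.conj_conj,
          Complex.conj_ofReal, RCLike.star_def]
        field_simp
        ring_nf
        have hm1 : x 1 * (starRingEnd ℂ) (x 1) = ((Complex.normSq (x 1) : ℝ) : ℂ) :=
          Complex.mul_conj (x 1)
        linear_combination (2 * (p.1.im:ℂ)^2 * (x 1) *
            (starRingEnd ℂ) (x 1)) * Complex.I_sq +
          (2 * (p.1.im:ℂ)^2) * hm1
      rw [key]
      rw [show ((0:ℂ) = ((0:ℝ):ℂ)) from rfl, Complex.real_lt_real]
      rcases eq_or_ne (x 1) 0 with h1 | h1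
      · have h0 : x 0 ≠ 0 := by
          intro h0
          apply hx
          funext i
          fin_cases i
          · exact h0
          · exact h1
        have : x 0 / (p.1.im : ℂ) - Complex.I * x 1 / (starRingEnd ℂ) p.2 ≠ 0 := by
          rw [h1]
          simp [div_eq_zero_iff, hy', h0]
        have := Complex.normSq_pos.2 this
        have h2 : 0 ≤ 2 * Complex.normSq (x 1) / Complex.normSq p.2 :=
          div_nonneg (by nlinarith [Complex.normSq_nonneg (x 1)]) (Complex.normSq_nonneg _)
        linarith
      · have := Complex.normSq_pos.2 h1
        have hnp : 0 < Complex.normSq p.2 := Complex.normSq_pos.2 hw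
        have h2 : 0 ≤ Complex.normSq (x 0 / (p.1.im : ℂ) - Complex.I * x 1 / (starRingEnd ℂ) p.2) :=
          Complex.normSq_nonneg _
        have : 0 < 2 * Complex.normSq (x 1) / Complex.normSq p.2 :=
          div_pos (by linarith) hnp
        linarith
  · -- Ricci (0,0)
    simp only [wd, if_pos rfl, f0, E0_apply]
    push_cast
    field_simp
    ring
    simp
  · -- Ricci (0,1)
    simp only [wd, if_pos rfl, f1, E1_apply]
    simp
  · -- Ricci (1,0)
    have h1 : (1 : Fin 2) ≠ 0 := by decide
    simp only [wd, if_neg h1, f0, E0_apply]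
    norm_num
  · -- Ricci (1,1)
    have h1 : (1 : Fin 2) ≠ 0 := by decide
    simp only [wd, if_neg h1, f1, E1_apply]
    simp only [Complex.conj_I]
    push_cast
    simp
    linear_combination ((((starRingEnd ℂ) p.2) ^ 2)⁻¹) * Complex.I_sq
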